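/- arXiv:2305.11054 — 2 statements merged into one kernel-verified Lean document; each statement's English description precedes it below -/
import Mathlib

section
/- Let α, α' : Z^d → [0,∞) be two symmetric coefficient systems satisfying ∑_k α_k‖k‖ < ∞ and ∑_k α'_k‖k‖ < ∞. For each rational direction ν ∈ S^{d-1}, let I(ν) = {k ∈ Z^d \ {0} : k/‖k‖ = ν}. Then the functions φ(z) = 4∑_k α_k|⟨z,k⟩| and φ'(z) = 4∑_k α'_k|⟨z,k⟩| coincide on R^d if and only if ∑_{k ∈ I(ν)} α_k‖k‖ = ∑_{k ∈ I(ν)} α'_k‖k‖ for every rational direction ν. -/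
open scoped RealInnerProductSpace
open Filter Topology MeasureTheory

lemma aux_abs (a x : ℝ) (h : |x| ≤ |a|) : |a + x| + |a - x| = 2 * |a| := by
  rcases le_or_gt 0 a with ha | ha
  · rw [abs_of_nonneg ha] at h
    have h1 := abs_le.1 h
    rw [abs_of_nonneg (by linarith), abs_of_nonneg (by linarith), abs_of_nonneg ha]; ring
  · rw [abs_of_neg ha] at h
    have h1 := abs_le.1 h
    rw [abs_of_nonpos (by linarith), abs_of_nonpos (by linarith), abs_of_neg ha]; ring

lemma aux_summable_inner {ι F : Type*} [NormedAddCommGroup F] [InnerProductSpace ℝ F]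
    {α : ι → ℝ} (hα : ∀ k, 0 ≤ α k) {f : ι → F}
    (hdec : Summable fun k => α k * ‖f k‖) (z : F) :
    Summable fun k => α k * |⟪z, f k⟫| := by
  refine Summable.of_nonneg_of_le (fun k => mul_nonneg (hα k) (abs_nonneg _))
    (fun k => ?_) (hdec.mul_right ‖z‖)
  have h := abs_real_inner_le_norm z (f k)
  calc α k * |⟪z, f k⟫| ≤ α k * (‖z‖ * ‖f k‖) :=
        mul_le_mul_of_nonneg_left h (hα k)
    _ = α k * ‖f k‖ * ‖z‖ := by ring

lemma aux_jump {ι F : Type*} [NormedAddCommGroup F] [InnerProductSpace ℝ F]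
    {α : ι → ℝ} (hα : ∀ k, 0 ≤ α k) {f : ι → F}
    (hdec : Summable fun k => α k * ‖f k‖) (z₀ v : F) :
    Tendsto (fun n : ℕ => ((n : ℝ) + 1) *
      ((∑' k, α k * |⟪z₀ + ((n : ℝ) + 1)⁻¹ • v, f k⟫|)
        + (∑' k, α k * |⟪z₀ - ((n : ℝ) + 1)⁻¹ • v, f k⟫|)
        - 2 * ∑' k, α k * |⟪z₀, f k⟫|)) atTop
      (𝓝 (∑' k, α k * (if ⟪z₀, f k⟫ = 0 then 2 * |⟪v, f k⟫| else 0))) := by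
  set a : ι → ℝ := fun k => ⟪z₀, f k⟫ with ha
  set b : ι → ℝ := fun k => ⟪v, f k⟫ with hb
  set t : ℕ → ℝ := fun n => ((n : ℝ) + 1)⁻¹ with hts
  have ht : ∀ n, 0 < t n := fun n => by positivity
  have hbnorm : ∀ k, |b k| ≤ ‖v‖ * ‖f k‖ := fun k => abs_real_inner_le_norm v (f k)
  set g : ℕ → ι → ℝ := fun n k =>
    α k * (((n : ℝ) + 1) * (|a k + t n * b k| + |a k - t n * b k| - 2 * |a k|)) with hg
  -- the sequence equals ∑' k, g n k
  have hseq : ∀ n : ℕ, ((n : ℝ) + 1) *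
      ((∑' k, α k * |⟪z₀ + t n • v, f k⟫|)
        + (∑' k, α k * |⟪z₀ - t n • v, f k⟫|)
        - 2 * ∑' k, α k * |⟪z₀, f k⟫|) = ∑' k, g n k := by
    intro n
    have e1 : ∀ k, (⟪z₀ + t n • v, f k⟫ : ℝ) = a k + t n * b k := fun k => by
      simp [ha, hb, inner_add_left, real_inner_smul_left]
    have e2 : ∀ k, (⟪z₀ - t n • v, f k⟫ : ℝ) = a k - t n * b k := fun k => by
      simp [ha, hb, inner_sub_left, real_inner_smul_left]
    have s1 : Summable fun k => α k * |a k + t n * b k| := by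
      have := aux_summable_inner hα hdec (z₀ + t n • v)
      exact this.congr fun k => by rw [e1]
    have s2 : Summable fun k => α k * |a k - t n * b k| := by
      have := aux_summable_inner hα hdec (z₀ - t n • v)
      exact this.congr fun k => by rw [e2]
    have s3 : Summable fun k => α k * |a k| := aux_summable_inner hα hdec z₀
    have r1 : (∑' k, α k * |⟪z₀ + t n • v, f k⟫|) = ∑' k, α k * |a k + t n * b k| :=
      tsum_congr fun k => by rw [e1]
    have r2 : (∑' k, α k * |⟪z₀ - t n • v, f k⟫|) = ∑' k, α k * |a k - t n * b k| :=
      tsum_congr fun k => by rw [e2]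
    rw [r1, r2, ← Summable.tsum_add s1 s2, ← tsum_mul_left (a := (2:ℝ)),
      ← Summable.tsum_sub ((s1.add s2)) (s3.mul_left 2), ← tsum_mul_left (a := ((n:ℝ)+1))]
    exact tsum_congr fun k => by simp only [hg]; ring
  have hseq' : (fun n : ℕ => ((n : ℝ) + 1) *
      ((∑' k, α k * |⟪z₀ + ((n : ℝ) + 1)⁻¹ • v, f k⟫|)
        + (∑' k, α k * |⟪z₀ - ((n : ℝ) + 1)⁻¹ • v, f k⟫|)
        - 2 * ∑' k, α k * |⟪z₀, f k⟫|)) = fun n => ∑' k, g n k := funext hseq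
  rw [hseq']
  -- dominated convergence
  have hG : ∀ k, (if (⟪z₀, f k⟫ : ℝ) = 0 then 2 * |⟪v, f k⟫| else 0)
      = (if a k = 0 then 2 * |b k| else 0) := fun k => rfl
  refine tendsto_tsum_of_dominated_convergence
    (bound := fun k => α k * (2 * (‖v‖ * ‖f k‖))) ?_ ?_ ?_
  · exact (hdec.mul_left (2 * ‖v‖)).congr fun k => by ring
  · intro k
    by_cases hak : a k = 0
    · have : ∀ n, g n k = α k * (if a k = 0 then 2 * |b k| else 0) := by
        intro n
        have h1 : ((n : ℝ) + 1) * (t n * |b k|) = |b k| := by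
          simp only [hts]; rw [← mul_assoc, mul_inv_cancel₀ (by positivity), one_mul]
        simp only [hg, hak, if_pos, zero_add, zero_sub, abs_neg, abs_zero, abs_mul,
          abs_of_pos (ht n)]
        linear_combination (2 * α k) * h1
      simp only [this]
      exact tendsto_const_nhds
    · rw [if_neg hak, mul_zero]
      have hlim : Tendsto (fun n : ℕ => t n * |b k|) atTop (𝓝 0) := by
        have h0 : Tendsto t atTop (𝓝 0) := by
          rw [hts]; simpa only [one_div] using (tendsto_one_div_add_atTop_nhds_zero_nat : Tendsto (fun n : ℕ => 1 / ((n : ℝ) + 1)) atTop (𝓝 0))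
        simpa using h0.mul_const |b k|
      have hev : ∀ᶠ n in atTop, t n * |b k| < |a k| :=
        hlim.eventually_lt_const (by positivity)
      refine Tendsto.congr' ?_ tendsto_const_nhds
      filter_upwards [hev] with n hn
      have habs : |t n * b k| ≤ |a k| := by
        rw [abs_mul, abs_of_pos (ht n)]; exact hn.le
      have := aux_abs (a k) (t n * b k) habs
      simp only [hg]
      rw [this]; ring
  · filter_upwards with n
    intro k
    have h1 : 2 * |a k| ≤ |a k + t n * b k| + |a k - t n * b k| := by
      have := abs_add_le (a k + t n * b k) (a k - t n * b k)
      have h2 : (a k + t n * b k) + (a k - t n * b k) = 2 * a k := by ring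
      rw [h2, abs_mul, abs_two] at this
      linarith
    have h2 : |a k + t n * b k| + |a k - t n * b k| - 2 * |a k| ≤ 2 * (t n * |b k|) := by
      have u1 := abs_add_le (a k) (t n * b k)
      have u2 := abs_sub (a k) (t n * b k)
      rw [abs_mul, abs_of_pos (ht n)] at u1 u2
      linarith
    have hnt : ((n : ℝ) + 1) * t n = 1 := by
      simp only [hts]; exact mul_inv_cancel₀ (by positivity)
    have hX0 : 0 ≤ |a k + t n * b k| + |a k - t n * b k| - 2 * |a k| := by linarith
    have key : ((n : ℝ) + 1) * (|a k + t n * b k| + |a k - t n * b k| - 2 * |a k|)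
        ≤ 2 * (‖v‖ * ‖f k‖) := by
      have h3 : ((n : ℝ) + 1) * (|a k + t n * b k| + |a k - t n * b k| - 2 * |a k|)
          ≤ ((n : ℝ) + 1) * (2 * (t n * |b k|)) :=
        mul_le_mul_of_nonneg_left h2 (by positivity)
      have h4 : ((n : ℝ) + 1) * (2 * (t n * |b k|)) = 2 * |b k| := by
        linear_combination (2 * |b k|) * hnt
      have h5 := hbnorm k
      linarith
    rw [hg]
    rw [Real.norm_eq_abs, abs_of_nonneg (mul_nonneg (hα k) (mul_nonneg (by positivity) hX0))]
    exact mul_le_mul_of_nonneg_left key (hα k)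

lemma aux_dichotomy {F : Type*} [NormedAddCommGroup F] [NormedSpace ℝ F]
    {v w : F} (hv : v ≠ 0) (hw : w ≠ 0) :
    v ∈ Submodule.span ℝ {w} ↔
      (‖v‖⁻¹ • v = ‖w‖⁻¹ • w ∨ ‖v‖⁻¹ • v = -(‖w‖⁻¹ • w)) := by
  have hnv : ‖v‖ ≠ 0 := norm_ne_zero_iff.2 hv
  have hnw : ‖w‖ ≠ 0 := norm_ne_zero_iff.2 hw
  constructor
  · intro h
    obtain ⟨c, rfl⟩ := Submodule.mem_span_singleton.1 h
    have hc : c ≠ 0 := by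
      rintro rfl; simp at hv
    rw [norm_smul, Real.norm_eq_abs, mul_inv, mul_comm, smul_smul, mul_assoc]
    rcases lt_or_gt_of_ne hc with hc' | hc'
    · right
      rw [abs_of_neg hc', ← neg_inv, neg_mul, inv_mul_cancel₀ hc]; module
    · left
      rw [abs_of_pos hc', inv_mul_cancel₀ hc]; module
  · rintro (h | h)
    · have : v = (‖v‖ * ‖w‖⁻¹) • w := by
        have := congrArg (fun x => ‖v‖ • x) h
        simpa [smul_smul, mul_inv_cancel₀ hnv, mul_assoc] using this
      exact this ▸ Submodule.smul_mem _ _ (Submodule.mem_span_singleton_self w)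
    · have : v = (-(‖v‖ * ‖w‖⁻¹)) • w := by
        have := congrArg (fun x => ‖v‖ • x) h
        simpa [smul_smul, mul_inv_cancel₀ hnv, mul_assoc] using this
      exact this ▸ Submodule.smul_mem _ _ (Submodule.mem_span_singleton_self w)

lemma aux_generic {d : ℕ} (v₀ : EuclideanSpace ℝ (Fin d))
    (S : Set (EuclideanSpace ℝ (Fin d))) (hS : S.Countable)
    (hSs : ∀ w ∈ S, w ∉ Submodule.span ℝ {v₀}) :
    ∃ z₀ : EuclideanSpace ℝ (Fin d),
      (∀ w' ∈ Submodule.span ℝ ({v₀} : Set (EuclideanSpace ℝ (Fin d))), ⟪z₀, w'⟫ = 0) ∧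
      ∀ w ∈ S, ⟪z₀, w⟫ ≠ 0 := by
  set W : Submodule ℝ (EuclideanSpace ℝ (Fin d)) := (Submodule.span ℝ ({v₀} : Set (EuclideanSpace ℝ (Fin d))))ᗮ with hW
  -- the kernel of ⟪w, ·⟫ restricted to W
  set T : EuclideanSpace ℝ (Fin d) → Submodule ℝ W := fun w =>
    LinearMap.ker (((innerSL ℝ w).comp W.subtypeL).toLinearMap) with hT
  have hTmem : ∀ (w : EuclideanSpace ℝ (Fin d)) (z : W), z ∈ T w ↔ ⟪w, (z : EuclideanSpace ℝ (Fin d))⟫ = 0 := by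
    intro w z
    simp [hT, LinearMap.mem_ker]
  have hTne : ∀ w ∈ S, T w ≠ ⊤ := by
    intro w hw hTop
    apply hSs w hw
    have : w ∈ Wᗮ := by
      rw [Submodule.mem_orthogonal]
      intro u hu
      have : (⟨u, hu⟩ : W) ∈ T w := hTop ▸ Submodule.mem_top
      rw [hTmem] at this
      rwa [real_inner_comm] at this
    rwa [hW, Submodule.orthogonal_orthogonal] at this
  -- move to a Euclidean model of W
  set m := Module.finrank ℝ W with hm
  set e := (stdOrthonormalBasis ℝ W).repr with he
  set T' : EuclideanSpace ℝ (Fin d) → Submodule ℝ (EuclideanSpace ℝ (Fin m)) := fun w =>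
    (T w).map (e.toLinearEquiv : W →ₗ[ℝ] EuclideanSpace ℝ (Fin m)) with hT'
  have hT'ne : ∀ w ∈ S, T' w ≠ ⊤ := by
    intro w hw hTop
    apply hTne w hw
    rw [Submodule.eq_top_iff']
    intro z
    have hz : e z ∈ T' w := hTop ▸ Submodule.mem_top
    obtain ⟨x, hx, hex⟩ := Submodule.mem_map.1 hz
    have : x = z := e.injective (by simpa using hex)
    rwa [← this]
  have hvol : volume (⋃ w ∈ S, (T' w : Set (EuclideanSpace ℝ (Fin m)))) = 0 := by
    refine (measure_biUnion_null_iff hS).2 fun w hw => ?_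
    exact Measure.addHaar_submodule volume (T' w) (hT'ne w hw)
  have huniv : volume (Set.univ : Set (EuclideanSpace ℝ (Fin m))) ≠ 0 :=
    isOpen_univ.measure_ne_zero volume Set.univ_nonempty
  have hne : ∃ y : EuclideanSpace ℝ (Fin m), y ∉ ⋃ w ∈ S, (T' w : Set (EuclideanSpace ℝ (Fin m))) := by
    by_contra h
    push_neg at h
    apply huniv
    refine measure_mono_null (fun y _ => h y) hvol
  obtain ⟨y, hy⟩ := hne
  refine ⟨((e.symm y : W) : EuclideanSpace ℝ (Fin d)), ?_, ?_⟩
  · intro w' hw'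
    have hz : ((e.symm y : W) : EuclideanSpace ℝ (Fin d)) ∈ W := (e.symm y).2
    exact (Submodule.mem_orthogonal' _ _).1 hz w' hw'
  · intro w hw h0
    apply hy
    refine Set.mem_biUnion hw ?_
    have : e.symm y ∈ T w := by
      rw [hTmem, real_inner_comm]
      exact h0
    have : e (e.symm y) ∈ T' w := Submodule.mem_map.2 ⟨e.symm y, this, by simp⟩
    simpa using this

/-- Two decaying symmetric Ising systems generate the same surface tension
`φ(z) = 4 ∑_k α_k |⟨z,k⟩|` if and only if, for every rational direction `ν`,
the grouped totals `∑_{k ∈ I(ν)} α_k ‖k‖` coincide. -/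
theorem stmt_11 (d : ℕ) (α α' : (Fin d → ℤ) → ℝ)
    (hα : ∀ k, 0 ≤ α k) (hα' : ∀ k, 0 ≤ α' k)
    (hsym : ∀ k, α (-k) = α k) (hsym' : ∀ k, α' (-k) = α' k)
    (latCoe : (Fin d → ℤ) → EuclideanSpace ℝ (Fin d))
    (hlat : ∀ k n, latCoe k n = (k n : ℝ))
    (hdec : Summable fun k => α k * ‖latCoe k‖)
    (hdec' : Summable fun k => α' k * ‖latCoe k‖) :
    (∀ z : EuclideanSpace ℝ (Fin d),
        4 * ∑' k, α k * |⟪z, latCoe k⟫| = 4 * ∑' k, α' k * |⟪z, latCoe k⟫|) ↔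
    (∀ k₀ : Fin d → ℤ, k₀ ≠ 0 →
      ∑' k : {k : Fin d → ℤ // k ≠ 0 ∧
          ‖latCoe k‖⁻¹ • latCoe k = ‖latCoe k₀‖⁻¹ • latCoe k₀},
        α k.1 * ‖latCoe k.1‖
      = ∑' k : {k : Fin d → ℤ // k ≠ 0 ∧
          ‖latCoe k‖⁻¹ • latCoe k = ‖latCoe k₀‖⁻¹ • latCoe k₀},
        α' k.1 * ‖latCoe k.1‖) := by
  have lat0 : latCoe 0 = 0 := by
    ext n
    rw [hlat]
    simp
  have latne : ∀ k : Fin d → ℤ, k ≠ 0 → latCoe k ≠ 0 := by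
    intro k hk heq
    apply hk
    funext n
    have h : latCoe k n = (0 : EuclideanSpace ℝ (Fin d)) n := by rw [heq]
    rw [hlat] at h
    have h0 : (0 : EuclideanSpace ℝ (Fin d)) n = (0:ℝ) := rfl
    rw [h0] at h
    have : k n = 0 := by simpa using h
    simpa using this
  have latneg : ∀ k : Fin d → ℤ, latCoe (-k) = -latCoe k := by
    intro k
    ext n
    have h1 := hlat (-k) n
    have h2 := hlat k n
    show latCoe (-k) n = (-(latCoe k)) n
    rw [h1]
    have h3 : (-(latCoe k)) n = -(latCoe k n) := rfl
    rw [h3, h2]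
    have h4 : (-k) n = -(k n) := rfl
    rw [h4]
    push_cast
    ring
  constructor
  · intro hφ k₀ hk₀
    have hF : ∀ z : EuclideanSpace ℝ (Fin d),
        ∑' k, α k * |⟪z, latCoe k⟫| = ∑' k, α' k * |⟪z, latCoe k⟫| := fun z =>
      mul_left_cancel₀ (by norm_num : (4:ℝ) ≠ 0) (hφ z)
    have hv₀ : latCoe k₀ ≠ 0 := latne k₀ hk₀
    have hnv₀ : ‖latCoe k₀‖ ≠ 0 := norm_ne_zero_iff.2 hv₀
    obtain ⟨z₀, hz₀span, hz₀S⟩ := aux_generic (latCoe k₀)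
      (latCoe '' {k | latCoe k ∉ Submodule.span ℝ ({latCoe k₀} : Set (EuclideanSpace ℝ (Fin d)))})
      ((Set.to_countable _).image _) (by rintro w ⟨k, hk, rfl⟩; exact hk)
    have hspan0 : ∀ k : Fin d → ℤ, ⟪z₀, latCoe k⟫ = 0 ↔
        latCoe k ∈ Submodule.span ℝ ({latCoe k₀} : Set (EuclideanSpace ℝ (Fin d))) := by
      intro k
      constructor
      · intro h0
        by_contra hmem
        exact hz₀S (latCoe k) ⟨k, hmem, rfl⟩ h0
      · intro hmem
        exact hz₀span _ hmem
    -- the two limits agree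
    have limα := aux_jump hα hdec z₀ (latCoe k₀)
    have limα' := aux_jump hα' hdec' z₀ (latCoe k₀)
    have limα2 := limα.congr (fun n => by rw [hF, hF, hF])
    have hL : (∑' k, α k * (if ⟪z₀, latCoe k⟫ = 0 then 2 * |⟪latCoe k₀, latCoe k⟫| else 0))
        = ∑' k, α' k * (if ⟪z₀, latCoe k⟫ = 0 then 2 * |⟪latCoe k₀, latCoe k⟫| else 0) :=
      tendsto_nhds_unique limα2 limα'
    -- compute the limit value for a symmetric system
    have key : ∀ (β : (Fin d → ℤ) → ℝ), (∀ k, 0 ≤ β k) → (∀ k, β (-k) = β k) →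
        (Summable fun k => β k * ‖latCoe k‖) →
        (∑' k, β k * (if ⟪z₀, latCoe k⟫ = 0 then 2 * |⟪latCoe k₀, latCoe k⟫| else 0))
          = (4 * ‖latCoe k₀‖) * ∑' k : {k : Fin d → ℤ // k ≠ 0 ∧
              ‖latCoe k‖⁻¹ • latCoe k = ‖latCoe k₀‖⁻¹ • latCoe k₀},
            β k.1 * ‖latCoe k.1‖ := by
      intro β hβ hsymβ hdecβ
      set f : (Fin d → ℤ) → ℝ :=
        fun k => β k * (if ⟪z₀, latCoe k⟫ = 0 then 2 * |⟪latCoe k₀, latCoe k⟫| else 0) with hf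
      set P : Set (Fin d → ℤ) := {k | k ≠ 0 ∧
        ‖latCoe k‖⁻¹ • latCoe k = ‖latCoe k₀‖⁻¹ • latCoe k₀} with hP
      set N : Set (Fin d → ℤ) := {k | k ≠ 0 ∧
        ‖latCoe k‖⁻¹ • latCoe k = -(‖latCoe k₀‖⁻¹ • latCoe k₀)} with hN
      -- summability of f
      have hfsum : Summable f := by
        refine Summable.of_nonneg_of_le (fun k => ?_) (fun k => ?_)
          (hdecβ.mul_right (2 * ‖latCoe k₀‖))
        · simp only [hf]
          refine mul_nonneg (hβ k) ?_
          split
          · positivity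
          · exact le_refl 0
        · simp only [hf]
          split
          · have h1 : |⟪latCoe k₀, latCoe k⟫| ≤ ‖latCoe k₀‖ * ‖latCoe k‖ :=
              abs_real_inner_le_norm _ _
            have h2 := mul_le_mul_of_nonneg_left h1 (hβ k)
            linarith
          · have : (0:ℝ) ≤ β k * ‖latCoe k‖ * (2 * ‖latCoe k₀‖) :=
              mul_nonneg (mul_nonneg (hβ k) (norm_nonneg _)) (by positivity)
            linarith
      -- support of f
      have hsupp : Function.support f ⊆ P ∪ N := by
        intro k hk
        rw [Function.mem_support] at hk
        simp only [hf] at hk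
        by_cases h0 : (⟪z₀, latCoe k⟫ : ℝ) = 0
        · rw [if_pos h0] at hk
          have hinner : (⟪latCoe k₀, latCoe k⟫ : ℝ) ≠ 0 := by
            intro h; apply hk; rw [h]; simp
          have hkne : k ≠ 0 := by
            rintro rfl; apply hinner; rw [lat0]; simp
          have hmem := (hspan0 k).1 h0
          rcases (aux_dichotomy (latne k hkne) hv₀).1 hmem with h | h
          · exact Or.inl ⟨hkne, h⟩
          · exact Or.inr ⟨hkne, h⟩
        · rw [if_neg h0, mul_zero] at hk
          exact absurd rfl hk
      -- P and N are disjoint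
      have hdisj : Disjoint P N := by
        rw [Set.disjoint_left]
        rintro k ⟨hk1, hk2⟩ ⟨hk1', hk2'⟩
        have heq : (‖latCoe k₀‖⁻¹ • latCoe k₀ : EuclideanSpace ℝ (Fin d))
            = -(‖latCoe k₀‖⁻¹ • latCoe k₀) := hk2.symm.trans hk2'
        have hadd := eq_neg_iff_add_eq_zero.1 heq
        have h2 : (2:ℝ) • (‖latCoe k₀‖⁻¹ • latCoe k₀ : EuclideanSpace ℝ (Fin d)) = 0 := by
          rw [two_smul]; exact hadd
        have hzero : (‖latCoe k₀‖⁻¹ • latCoe k₀ : EuclideanSpace ℝ (Fin d)) = 0 :=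
          (smul_eq_zero.1 h2).resolve_left two_ne_zero
        exact smul_ne_zero (inv_ne_zero hnv₀) hv₀ hzero
      -- split the sum
      have hPN : ∑' k, f k = (∑' k : ↥P, f k) + ∑' k : ↥N, f k := by
        rw [← tsum_subtype_eq_of_support_subset hsupp,
          (hfsum.subtype _).tsum_union_disjoint hdisj (hfsum.subtype _)]
      -- value on P
      have hPval : ∀ k : Fin d → ℤ, k ∈ P → f k = (2 * ‖latCoe k₀‖) * (β k * ‖latCoe k‖) := by
        rintro k ⟨hkne, hkdir⟩
        have hnk : ‖latCoe k‖ ≠ 0 := norm_ne_zero_iff.2 (latne k hkne)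
        have hmem : latCoe k ∈ Submodule.span ℝ ({latCoe k₀} : Set (EuclideanSpace ℝ (Fin d))) :=
          (aux_dichotomy (latne k hkne) hv₀).2 (Or.inl hkdir)
        have h0 : (⟪z₀, latCoe k⟫ : ℝ) = 0 := (hspan0 k).2 hmem
        have hrep : latCoe k = (‖latCoe k‖ * ‖latCoe k₀‖⁻¹) • latCoe k₀ := by
          rw [← smul_smul, ← hkdir, smul_inv_smul₀ hnk]
        have hip : (⟪latCoe k₀, latCoe k⟫ : ℝ) = ‖latCoe k‖ * ‖latCoe k₀‖ := by
          conv_lhs => rw [hrep]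
          rw [real_inner_smul_right, real_inner_self_eq_norm_mul_norm]
          field_simp
        simp only [hf]
        rw [if_pos h0, hip, abs_of_nonneg (by positivity : (0:ℝ) ≤ ‖latCoe k‖ * ‖latCoe k₀‖)]
        ring
      have hPsum : ∑' k : ↥P, f k = (2 * ‖latCoe k₀‖) * ∑' k : ↥P, β k.1 * ‖latCoe k.1‖ := by
        rw [← tsum_mul_left]
        exact tsum_congr fun k => hPval k.1 k.2
      -- N sums to the same as P, via k ↦ -k
      have hdirneg : ∀ k : Fin d → ℤ, (‖latCoe (-k)‖⁻¹ • latCoe (-k) : EuclideanSpace ℝ (Fin d))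
          = -(‖latCoe k‖⁻¹ • latCoe k) := by
        intro k; rw [latneg, norm_neg, smul_neg]
      let e : ↥P ≃ ↥N :=
        { toFun := fun p => ⟨-p.1, neg_ne_zero.2 p.2.1, by rw [hdirneg, p.2.2]⟩
          invFun := fun q => ⟨-q.1, neg_ne_zero.2 q.2.1, by
            have := hdirneg q.1
            rw [q.2.2] at this
            rw [this, neg_neg]⟩
          left_inv := fun p => Subtype.ext (neg_neg p.1)
          right_inv := fun q => Subtype.ext (neg_neg q.1) }
      have fneg : ∀ k : Fin d → ℤ, f (-k) = f k := by
        intro k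
        simp only [hf, latneg, inner_neg_right, neg_eq_zero, abs_neg, hsymβ]
      have hNsum : ∑' k : ↥N, f k = ∑' k : ↥P, f k := by
        rw [← Equiv.tsum_eq e (fun q : ↥N => f q.1)]
        exact tsum_congr fun p => fneg p.1
      rw [hPN, hNsum, hPsum]
      have hPI : (∑' (k : ↥P), β k.1 * ‖latCoe k.1‖)
          = ∑' k : {k : Fin d → ℤ // k ≠ 0 ∧
              ‖latCoe k‖⁻¹ • latCoe k = ‖latCoe k₀‖⁻¹ • latCoe k₀},
            β k.1 * ‖latCoe k.1‖ := rfl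
      rw [hPI]
      ring
    have keyα := key α hα hsym hdec
    have keyα' := key α' hα' hsym' hdec'
    rw [keyα, keyα'] at hL
    exact mul_left_cancel₀ (mul_ne_zero (by norm_num) hnv₀) hL
  · intro hgroup z
    congr 1
    set u : {k : Fin d → ℤ // k ≠ 0} → EuclideanSpace ℝ (Fin d) :=
      fun q => ‖latCoe q.1‖⁻¹ • latCoe q.1 with hu
    have key : ∀ (β : (Fin d → ℤ) → ℝ), (∀ k, 0 ≤ β k) →
        (Summable fun k => β k * ‖latCoe k‖) →
        ∑' k, β k * |⟪z, latCoe k⟫| =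
          ∑' (ν : EuclideanSpace ℝ (Fin d)), ∑' (p : u ⁻¹' {ν}),
              β p.1.1 * |⟪z, latCoe p.1.1⟫| := by
      intro β hβ hdecβ
      have hsum : Summable fun k => β k * |⟪z, latCoe k⟫| := aux_summable_inner hβ hdecβ z
      have h1 : ∑' (q : {k : Fin d → ℤ // k ≠ 0}), β q.1 * |⟪z, latCoe q.1⟫|
          = ∑' k, β k * |⟪z, latCoe k⟫| := by
        refine tsum_subtype_eq_of_support_subset
          (f := fun k => β k * |⟪z, latCoe k⟫|) (s := {k | k ≠ 0}) ?_
        intro k hk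
        simp only [Function.mem_support] at hk
        simp only [Set.mem_setOf_eq]
        intro hk0
        apply hk
        rw [hk0, lat0, inner_zero_right, abs_zero, mul_zero]
      have hsumT : Summable fun q : {k : Fin d → ℤ // k ≠ 0} => β q.1 * |⟪z, latCoe q.1⟫| :=
        hsum.subtype {k | k ≠ 0}
      have h2 := (hsumT.hasSum.tsum_fiberwise u).tsum_eq
      rw [← h1, ← h2]
    rw [key α hα hdec, key α' hα' hdec']
    refine tsum_congr fun ν => ?_
    by_cases hne : Nonempty (u ⁻¹' {ν})
    · obtain ⟨p₀⟩ := hne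
      have hk₀ : p₀.1.1 ≠ 0 := p₀.1.2
      have hν : (‖latCoe p₀.1.1‖⁻¹ • latCoe p₀.1.1 : EuclideanSpace ℝ (Fin d)) = ν := p₀.2
      set I := {k : Fin d → ℤ // k ≠ 0 ∧
          ‖latCoe k‖⁻¹ • latCoe k = ‖latCoe p₀.1.1‖⁻¹ • latCoe p₀.1.1} with hI
      let e : (u ⁻¹' {ν}) ≃ I :=
        { toFun := fun p => ⟨p.1.1, p.1.2, p.2.trans hν.symm⟩
          invFun := fun k => ⟨⟨k.1, k.2.1⟩, show u ⟨k.1, k.2.1⟩ ∈ ({ν} : Set _) from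
            k.2.2.trans hν⟩
          left_inv := fun p => rfl
          right_inv := fun k => rfl }
      have fib : ∀ (β : (Fin d → ℤ) → ℝ),
          ∑' (p : u ⁻¹' {ν}), β p.1.1 * |⟪z, latCoe p.1.1⟫|
            = (∑' k : I, β k.1 * ‖latCoe k.1‖) * |⟪z, ν⟫| := by
        intro β
        have hterm : ∀ (kp : Fin d → ℤ), kp ≠ 0 →
            (‖latCoe kp‖⁻¹ • latCoe kp : EuclideanSpace ℝ (Fin d)) = ν →
            β kp * |⟪z, latCoe kp⟫| = (β kp * ‖latCoe kp‖) * |⟪z, ν⟫| := by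
          intro kp hkp hp
          have hpne : latCoe kp ≠ 0 := latne _ hkp
          have hnorm : ‖latCoe kp‖ ≠ 0 := norm_ne_zero_iff.2 hpne
          rw [← hp, real_inner_smul_right, abs_mul, abs_inv, abs_norm]
          field_simp
        calc ∑' (p : u ⁻¹' {ν}), β p.1.1 * |⟪z, latCoe p.1.1⟫|
            = ∑' (p : u ⁻¹' {ν}), (β p.1.1 * ‖latCoe p.1.1‖) * |⟪z, ν⟫| :=
              tsum_congr fun p => hterm p.1.1 p.1.2 p.2
          _ = (∑' (p : u ⁻¹' {ν}), β p.1.1 * ‖latCoe p.1.1‖) * |⟪z, ν⟫| := tsum_mul_right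
          _ = (∑' k : I, β k.1 * ‖latCoe k.1‖) * |⟪z, ν⟫| := by
              congr 1
              exact Equiv.tsum_eq e (fun k : I => β k.1 * ‖latCoe k.1‖)
      rw [fib α, fib α', hgroup p₀.1.1 hk₀]
    · haveI := not_nonempty_iff.1 hne
      rw [tsum_empty, tsum_empty]
end

section
/- Let α : Z^d → [0,∞) be symmetric with finite support, and suppose the set {k ∈ Z^d : α_k > 0} generates Z^d as a group. Then there exist constants M > 0 such that for every u : Z^d → {-1,1}, #{(i,j) ∈ Z^d × Z^d : ‖i-j‖ = 1, u_i ≠ u_j} ≤ M ∑_{i,j ∈ Z^d} α_{i-j}(u_i - u_j)^2, where the right-hand side is allowed to be +∞. -/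
open scoped Classical

lemma sum_map_neg' {G : Type*} [AddCommGroup G] (L : List G) :
    (L.map (fun k => -k)).sum = -L.sum := by
  induction L with
  | nil => simp
  | cons k L ih => simp [ih]; abel

lemma exists_list' {d : ℕ} (α : (Fin d → ℤ) → ℝ) (hsym : ∀ k, α (-k) = α k)
    (x : Fin d → ℤ) (hx : x ∈ AddSubgroup.closure {k | 0 < α k}) :
    ∃ L : List (Fin d → ℤ), (∀ k ∈ L, 0 < α k) ∧ L.sum = x := by
  induction hx using AddSubgroup.closure_induction with
  | mem k hk => exact ⟨[k], by simpa using hk, by simp⟩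
  | zero => exact ⟨[], by simp, by simp⟩
  | add a b _ _ ha hb =>
    obtain ⟨L1, h1, s1⟩ := ha; obtain ⟨L2, h2, s2⟩ := hb
    refine ⟨L1 ++ L2, ?_, by simp [s1, s2]⟩
    intro k hk
    rcases List.mem_append.1 hk with h | h
    exacts [h1 k h, h2 k h]
  | neg a _ ha =>
    obtain ⟨L, h1, s1⟩ := ha
    refine ⟨L.map (fun k => -k), ?_, by rw [sum_map_neg', s1]⟩
    intro k hk
    simp only [List.mem_map] at hk
    obtain ⟨j, hj, rfl⟩ := hk
    simpa [hsym] using h1 j hj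

lemma exists_step' {G : Type*} [AddGroup G] (u : G → ℝ) :
    ∀ (L : List G) (x : G), u x ≠ u (x + L.sum) →
      ∃ t, t < L.length ∧ u (x + (L.take t).sum) ≠ u (x + (L.take (t+1)).sum) := by
  intro L
  induction L with
  | nil => intro x h; simp at h
  | cons k L ih =>
    intro x h
    by_cases hk : u x = u (x + k)
    · rw [hk] at h
      obtain ⟨t, ht, hne⟩ := ih (x + k) (by simpa [add_assoc] using h)
      exact ⟨t+1, Nat.succ_lt_succ ht, by simpa [add_assoc] using hne⟩
    · exact ⟨0, by simp, by simpa using hk⟩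

lemma charge_le {P D : Type*} [Fintype D] (T B : P → Prop) (ψ : {p : P // T p} → P × D)
    (hinj : Function.Injective ψ) (hgood : ∀ x, B (ψ x).1) :
    (∑' p : P, if T p then (1 : ENNReal) else 0)
      ≤ (Fintype.card D : ENNReal)
          * ∑' q : P, Set.indicator {q : P | B q} (fun _ => (1 : ENNReal)) q := by
  calc (∑' p : P, if T p then (1 : ENNReal) else 0)
      = ∑' p : P, Set.indicator {p : P | T p} (fun _ => (1 : ENNReal)) p :=
        tsum_congr fun p => by by_cases h : T p <;> simp [Set.indicator_apply, h]
    _ = ∑' x : {p : P | T p}, (1 : ENNReal) := (tsum_subtype _ _).symm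
    _ = ∑' x : {p : P // T p},
          (fun z : P × D => Set.indicator {q : P | B q} (fun _ => (1 : ENNReal)) z.1) (ψ x) :=
        tsum_congr fun x => by simp [Set.indicator_apply, hgood x]
    _ ≤ ∑' z : P × D, Set.indicator {q : P | B q} (fun _ => (1 : ENNReal)) z.1 :=
        ENNReal.tsum_comp_le_tsum_of_injective hinj _
    _ = ∑' q : P, ∑' _ : D, Set.indicator {q : P | B q} (fun _ => (1 : ENNReal)) q :=
        ENNReal.tsum_prod (f := fun q _ => Set.indicator {q : P | B q} (fun _ => (1 : ENNReal)) q)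
    _ = ∑' q : P, (Fintype.card D : ENNReal)
          * Set.indicator {q : P | B q} (fun _ => (1 : ENNReal)) q :=
        tsum_congr fun q => by rw [tsum_fintype]; simp [Finset.sum_const, nsmul_eq_mul]
    _ = _ := ENNReal.tsum_mul_left

/-- Coercivity of a connected finite-range Ising system: the number of
nearest-neighbour sign changes of a spin function is controlled by the Ising
energy (both counted as sums in `ℝ≥0∞`). -/
theorem stmt_14 (d : ℕ) (α : (Fin d → ℤ) → ℝ) (hα : ∀ k, 0 ≤ α k)
    (hsym : ∀ k, α (-k) = α k) (hfin : (Function.support α).Finite)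
    (hspan : AddSubgroup.closure {k : Fin d → ℤ | 0 < α k} = ⊤) :
    ∃ M : ℝ, 0 < M ∧ ∀ u : (Fin d → ℤ) → ℝ, (∀ i, u i = 1 ∨ u i = -1) →
      (∑' p : (Fin d → ℤ) × (Fin d → ℤ),
        (if (∃ n : Fin d, p.1 - p.2 = Pi.single n (1 : ℤ) ∨
              p.1 - p.2 = Pi.single n (-1 : ℤ)) ∧ u p.1 ≠ u p.2
          then (1 : ENNReal) else 0))
      ≤ ENNReal.ofReal M * ∑' p : (Fin d → ℤ) × (Fin d → ℤ),
          ENNReal.ofReal (α (p.1 - p.2) * (u p.1 - u p.2) ^ 2) := by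
  classical
  rcases Nat.eq_zero_or_pos d with hd | hd
  · subst hd
    refine ⟨1, one_pos, fun u hu => ?_⟩
    have h0 : ∀ p : (Fin 0 → ℤ) × (Fin 0 → ℤ),
        (if (∃ n : Fin 0, p.1 - p.2 = Pi.single n (1 : ℤ) ∨
              p.1 - p.2 = Pi.single n (-1 : ℤ)) ∧ u p.1 ≠ u p.2
          then (1 : ENNReal) else 0) = 0 := fun p => by simp
    rw [tsum_congr h0, tsum_zero]
    exact zero_le
  -- finiteness / positivity constants
  have hSfin : {k : Fin d → ℤ | 0 < α k}.Finite :=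
    hfin.subset fun k hk => ne_of_gt hk
  -- paths from the generating set
  have hpath : ∀ nb : Fin d × Bool,
      ∃ L : List (Fin d → ℤ), (∀ k ∈ L, 0 < α k) ∧
        L.sum = (if nb.2 then Pi.single nb.1 (1 : ℤ) else Pi.single nb.1 (-1 : ℤ)) :=
    fun nb => exists_list' α hsym _ (by rw [hspan]; trivial)
  choose path hpathS hpathsum using hpath
  set Lmax := (Finset.univ : Finset (Fin d × Bool)).sup fun nb => (path nb).length with hLmax
  have hlen : ∀ nb, (path nb).length ≤ Lmax := fun nb =>
    Finset.le_sup (f := fun nb => (path nb).length) (Finset.mem_univ nb)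
  -- minimal positive coupling
  have hSne : hSfin.toFinset.Nonempty := by
    obtain ⟨L0, hL0, hs0⟩ := exists_list' α hsym (Pi.single (⟨0, hd⟩ : Fin d) 1)
      (by rw [hspan]; trivial)
    rcases L0 with _ | ⟨k, L0⟩
    · exfalso
      have := congrFun hs0 ⟨0, hd⟩
      simp at this
    · exact ⟨k, hSfin.mem_toFinset.2 (hL0 k (List.mem_cons_self))⟩
  have hAne : (hSfin.toFinset.image α).Nonempty := hSne.image α
  set αmin := (hSfin.toFinset.image α).min' hAne with hαmin
  have hαminpos : 0 < αmin := by
    obtain ⟨k, hk, hke⟩ := Finset.mem_image.1 ((hSfin.toFinset.image α).min'_mem hAne)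
    rw [hαmin, ← hke]
    exact hSfin.mem_toFinset.1 hk
  have hαminle : ∀ k, 0 < α k → αmin ≤ α k := fun k hk =>
    Finset.min'_le _ _ (Finset.mem_image_of_mem α (hSfin.mem_toFinset.2 hk))
  haveI : Nonempty (Fin d) := ⟨⟨0, hd⟩⟩
  set N := Fintype.card (Fin d × Bool × Fin (Lmax + 1)) with hN
  have hNpos : 0 < N := Fintype.card_pos
  refine ⟨(N : ℝ) * (4 * αmin)⁻¹, by positivity, fun u hu => ?_⟩
  -- square of sign difference
  have hsq : ∀ i j : Fin d → ℤ, u i ≠ u j → (u i - u j) ^ 2 = 4 := by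
    intro i j hne
    rcases hu i with h | h <;> rcases hu j with h' | h' <;>
      rw [h, h'] at hne ⊢ <;> norm_num at hne <;> norm_num
  -- the charging map
  have hvec : ∀ x : {p : (Fin d → ℤ) × (Fin d → ℤ) //
      (∃ n : Fin d, p.1 - p.2 = Pi.single n (1 : ℤ) ∨ p.1 - p.2 = Pi.single n (-1 : ℤ)) ∧
        u p.1 ≠ u p.2}, ∃ nb : Fin d × Bool,
      x.1.1 - x.1.2 = (if nb.2 then Pi.single nb.1 (1 : ℤ) else Pi.single nb.1 (-1 : ℤ)) := by
    rintro ⟨p, ⟨n, h | h⟩, -⟩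
    · exact ⟨(n, true), by simpa using h⟩
    · exact ⟨(n, false), by simpa using h⟩
  choose nb hnb using hvec
  have hsum : ∀ x, x.1.2 + (path (nb x)).sum = x.1.1 := by
    intro x
    rw [hpathsum, ← hnb x]
    abel
  have hstep : ∀ x, ∃ t, t < (path (nb x)).length ∧
      u (x.1.2 + ((path (nb x)).take t).sum) ≠ u (x.1.2 + ((path (nb x)).take (t+1)).sum) := by
    intro x
    apply exists_step' u (path (nb x)) x.1.2
    rw [hsum x]
    exact x.2.2.symm
  choose tt htlt htne using hstep
  have key := charge_le (D := Fin d × Bool × Fin (Lmax + 1))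
    (fun p : (Fin d → ℤ) × (Fin d → ℤ) =>
      (∃ n : Fin d, p.1 - p.2 = Pi.single n (1 : ℤ) ∨ p.1 - p.2 = Pi.single n (-1 : ℤ)) ∧
        u p.1 ≠ u p.2)
    (fun q => 0 < α (q.1 - q.2) ∧ u q.1 ≠ u q.2)
    (fun x => ((x.1.2 + ((path (nb x)).take (tt x + 1)).sum,
                x.1.2 + ((path (nb x)).take (tt x)).sum),
               (nb x).1, (nb x).2, ⟨tt x, Nat.lt_succ_of_le ((htlt x).le.trans (hlen (nb x)))⟩))
    ?_ ?_
  · refine le_trans ?_ (le_trans key ?_)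
    · refine le_of_eq (tsum_congr fun p => ?_)
      congr 1
    · -- from the indicator of B to the energy
      have hmono : (∑' q : (Fin d → ℤ) × (Fin d → ℤ),
            Set.indicator {q : (Fin d → ℤ) × (Fin d → ℤ) |
              (fun q : (Fin d → ℤ) × (Fin d → ℤ) => 0 < α (q.1 - q.2) ∧ u q.1 ≠ u q.2) q}
              (fun _ => (1 : ENNReal)) q)
          ≤ ENNReal.ofReal ((4 * αmin)⁻¹) * ∑' q : (Fin d → ℤ) × (Fin d → ℤ),
              ENNReal.ofReal (α (q.1 - q.2) * (u q.1 - u q.2) ^ 2) := by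
        rw [← ENNReal.tsum_mul_left]
        refine ENNReal.tsum_le_tsum fun q => ?_
        by_cases hq : 0 < α (q.1 - q.2) ∧ u q.1 ≠ u q.2
        · rw [Set.indicator_of_mem (by exact hq), ← ENNReal.ofReal_mul (by positivity)]
          refine ENNReal.one_le_ofReal.2 ?_
          have h4 := hsq _ _ hq.2
          have hle := hαminle _ hq.1
          rw [h4, inv_mul_eq_div, le_div_iff₀ (by positivity)]
          linarith
        · rw [Set.indicator_of_notMem (by exact hq)]
          exact zero_le
      calc (N : ENNReal) * ∑' q : (Fin d → ℤ) × (Fin d → ℤ),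
            Set.indicator {q : (Fin d → ℤ) × (Fin d → ℤ) |
              (fun q : (Fin d → ℤ) × (Fin d → ℤ) => 0 < α (q.1 - q.2) ∧ u q.1 ≠ u q.2) q}
              (fun _ => (1 : ENNReal)) q
          ≤ (N : ENNReal) * (ENNReal.ofReal ((4 * αmin)⁻¹) *
              ∑' q : (Fin d → ℤ) × (Fin d → ℤ),
                ENNReal.ofReal (α (q.1 - q.2) * (u q.1 - u q.2) ^ 2)) :=
            mul_le_mul_right hmono _
        _ = ENNReal.ofReal ((N : ℝ) * (4 * αmin)⁻¹) *
              ∑' q : (Fin d → ℤ) × (Fin d → ℤ),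
                ENNReal.ofReal (α (q.1 - q.2) * (u q.1 - u q.2) ^ 2) := by
            rw [ENNReal.ofReal_mul (by positivity), ENNReal.ofReal_natCast, mul_assoc]
  · -- injectivity
    intro x y h
    simp only [Prod.mk.injEq, Fin.mk.injEq] at h
    obtain ⟨⟨h1, h2⟩, hnb1, hnb2, ht'⟩ := h
    have hnbe : nb x = nb y := Prod.ext hnb1 hnb2
    rw [← hnbe, ← ht'] at h2
    have h22 : x.1.2 = y.1.2 := add_right_cancel h2
    have h11 : x.1.1 = y.1.1 := by
      rw [← hsum x, ← hsum y, h22, hnbe]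
    exact Subtype.ext (Prod.ext h11 h22)
  · -- goodness
    intro x
    simp only []
    constructor
    · have hdiff : (x.1.2 + ((path (nb x)).take (tt x + 1)).sum)
          - (x.1.2 + ((path (nb x)).take (tt x)).sum)
          = (path (nb x))[tt x]'(htlt x) := by
        rw [List.sum_take_succ _ _ (htlt x)]
        abel
      rw [hdiff]
      exact hpathS _ _ (List.getElem_mem _)
    · exact (htne x).symm
end
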